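/- Let a, b, c, x, y be complex numbers with a, b, c pairwise distinct, and suppose the point X (affix x) lies strictly inside triangle ABC (i.e., x is a strictly positive convex combination of a, b, c) and y is the isogonal conjugate of x, meaning all three numbers (x-a)(y-a)/((b-a)(c-a)), (x-b)(y-b)/((a-b)(c-b)), (x-c)(y-c)/((a-c)(b-c)) are positive reals. Then |(x-a)(y-a)|·|b-c| + |(x-b)(y-b)|·|c-a| + |(x-c)(y-c)|·|a-b| equals |b-a|·|c-a|·|b-c| (i.e., equality a·AX·AY + b·BX·BY + c·CX·CY = abc holds). -/

import Mathlib

theorem stmt_14 (a b c x y : ℂ) (hab : a ≠ b) (hac : a ≠ c) (hbc : b ≠ c)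
    (hx : ∃ u v w : ℝ, 0 < u ∧ 0 < v ∧ 0 < w ∧ u + v + w = 1 ∧
      x = (u : ℂ) * a + (v : ℂ) * b + (w : ℂ) * c)
    (h1 : ∃ r : ℝ, 0 < r ∧ (x - a) * (y - a) / ((b - a) * (c - a)) = (r : ℂ))
    (h2 : ∃ r : ℝ, 0 < r ∧ (x - b) * (y - b) / ((a - b) * (c - b)) = (r : ℂ))
    (h3 : ∃ r : ℝ, 0 < r ∧ (x - c) * (y - c) / ((a - c) * (b - c)) = (r : ℂ)) :
    ‖(x - a) * (y - a)‖ * ‖b - c‖ +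
    ‖(x - b) * (y - b)‖ * ‖c - a‖ +
    ‖(x - c) * (y - c)‖ * ‖a - b‖ =
      ‖b - a‖ * ‖c - a‖ * ‖b - c‖ := by
  obtain ⟨r1, hr1, e1⟩ := h1
  obtain ⟨r2, hr2, e2⟩ := h2
  obtain ⟨r3, hr3, e3⟩ := h3
  have hba : b - a ≠ 0 := sub_ne_zero.mpr (Ne.symm hab)
  have hca : c - a ≠ 0 := sub_ne_zero.mpr (Ne.symm hac)
  have hab' : a - b ≠ 0 := sub_ne_zero.mpr hab
  have hcb : c - b ≠ 0 := sub_ne_zero.mpr (Ne.symm hbc)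
  have hac' : a - c ≠ 0 := sub_ne_zero.mpr hac
  have hbc' : b - c ≠ 0 := sub_ne_zero.mpr hbc
  have hsum : (x - a) * (y - a) / ((b - a) * (c - a)) +
      (x - b) * (y - b) / ((a - b) * (c - b)) +
      (x - c) * (y - c) / ((a - c) * (b - c)) = 1 := by
    field_simp
    ring
  rw [e1, e2, e3] at hsum
  have hsumr : r1 + r2 + r3 = 1 := by exact_mod_cast hsum
  have f1 : (x - a) * (y - a) = (r1 : ℂ) * ((b - a) * (c - a)) :=
    (div_eq_iff (mul_ne_zero hba hca)).mp e1
  have f2 : (x - b) * (y - b) = (r2 : ℂ) * ((a - b) * (c - b)) :=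
    (div_eq_iff (mul_ne_zero hab' hcb)).mp e2
  have f3 : (x - c) * (y - c) = (r3 : ℂ) * ((a - c) * (b - c)) :=
    (div_eq_iff (mul_ne_zero hac' hbc')).mp e3
  rw [f1, f2, f3]
  simp only [norm_mul, Complex.norm_real, Real.norm_eq_abs, abs_of_pos hr1, abs_of_pos hr2, abs_of_pos hr3]
  rw [norm_sub_rev a b, norm_sub_rev a c,
    norm_sub_rev c b]
  linear_combination (‖b - a‖ * ‖c - a‖ * ‖b - c‖) * hsumr
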